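/- Chen's shuffle identity for iterated integrals: if for each letter a ∈ A, λ_a : ℝ → ℂ is continuous, and the iterated-integral coefficients are defined by α_{a₁}(t) = ∫₀ᵗ λ_{a₁}(t₁) dt₁ and α_{a₁⋯aₙ}(t) = ∫₀ᵗ λ_{aₙ}(tₙ) α_{a₁⋯a_{n-1}}(tₙ) dtₙ for n > 1, together with α_∅(t) = 1, then for every t the family α(t) satisfies the shuffle relations: α_w(t) α_{w'}(t) = Σⱼ α_{wⱼ}(t) whenever w ⧢ w' = Σⱼ wⱼ. -/

import Mathlib

/-- The shuffle product of two words: the multiset of all order-preserving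
interleavings of the two words. -/
def shuffle {A : Type*} : List A → List A → Multiset (List A)
  | [], w' => {w'}
  | w, [] => {w}
  | a :: w, b :: w' =>
      (shuffle w (b :: w')).map (a :: ·) + (shuffle (a :: w) w').map (b :: ·)

/-- `γ ∈ ℂ^𝒲` satisfies the shuffle relations. -/
def IsShuffleChar {A : Type*} (γ : List A → ℂ) : Prop :=
  γ [] = 1 ∧ ∀ w w' : List A, γ w * γ w' = ((shuffle w w').map γ).sum

/-- Iterated integral coefficients for the reversed word: `chenAux [aₙ,…,a₁] t`
is `α_{a₁⋯aₙ}(t)`, defined by `α_∅ = 1`,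
`α_{a₁⋯aₙ}(t) = ∫₀ᵗ λ_{aₙ}(s) α_{a₁⋯a_{n-1}}(s) ds`. -/
noncomputable def chenAux {A : Type*} (lam : A → ℝ → ℂ) : List A → ℝ → ℂ
  | [], _ => 1
  | a :: w, t => ∫ s in (0 : ℝ)..t, lam a s * chenAux lam w s

/-- The iterated-integral coefficient `α_w(t)` of the word `w`. -/
noncomputable def chenCoeff {A : Type*} (lam : A → ℝ → ℂ) (w : List A) (t : ℝ) : ℂ :=
  chenAux lam w.reverse t

/-! ### Combinatorial lemmas about `shuffle` -/

lemma shuffle_nil_left {A : Type*} (w : List A) : shuffle [] w = {w} := by simp [shuffle]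

lemma shuffle_nil_right {A : Type*} (w : List A) : shuffle w [] = {w} := by
  cases w <;> simp [shuffle]

lemma shuffle_cons_cons {A : Type*} (a b : A) (w w' : List A) : shuffle (a::w) (b::w') =
    (shuffle w (b :: w')).map (a :: ·) + (shuffle (a :: w) w').map (b :: ·) := by simp [shuffle]

lemma shuffle_comm {A : Type*} : ∀ u v : List A, shuffle u v = shuffle v u := by
  intro u
  induction u with
  | nil => intro v; rw [shuffle_nil_left, shuffle_nil_right]
  | cons a u ihu =>
    intro v
    induction v with
    | nil => rw [shuffle_nil_left, shuffle_nil_right]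
    | cons b v ihv =>
      rw [shuffle_cons_cons, shuffle_cons_cons b a, ihu, ihv, add_comm]

lemma shuffle_singleton_snoc {A : Type*} (a b : A) : ∀ z : List A,
    shuffle [a] (z ++ [b]) = {z ++ [b, a]} + (shuffle [a] z).map (· ++ [b]) := by
  intro z
  induction z with
  | nil =>
    simp [shuffle, add_comm]
  | cons c z ih =>
    rw [List.cons_append, shuffle_cons_cons, shuffle_nil_left, ih, shuffle_cons_cons,
      shuffle_nil_left]
    simp [Multiset.map_map, Function.comp]
    exact Multiset.cons_swap _ _ _

lemma shuffle_snoc_snoc {A : Type*} (a b : A) : ∀ x y : List A,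
    shuffle (x ++ [a]) (y ++ [b]) =
      (shuffle x (y ++ [b])).map (· ++ [a]) + (shuffle (x ++ [a]) y).map (· ++ [b]) := by
  intro x
  induction x with
  | nil =>
    intro y
    rw [List.nil_append, shuffle_singleton_snoc, shuffle_nil_left]
    simp [add_comm]
  | cons p x ihx =>
    intro y
    induction y with
    | nil =>
      rw [List.nil_append, shuffle_comm _ [b], shuffle_singleton_snoc, shuffle_nil_right,
        shuffle_comm [b]]
      simp [add_comm]
    | cons c y ihy =>
      have h1 := ihx (c :: y)
      simp only [List.cons_append] at h1 ihy ⊢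
      rw [shuffle_cons_cons, h1, ihy, shuffle_cons_cons p c x (y ++ [b]),
        shuffle_cons_cons p c (x ++ [a]) y]
      simp only [Multiset.map_add, Multiset.map_map, Function.comp, List.cons_append]
      abel

lemma shuffle_reverse {A : Type*} : ∀ u v : List A,
    (shuffle u v).map List.reverse = shuffle u.reverse v.reverse := by
  intro u
  induction u with
  | nil => intro v; simp [shuffle_nil_left, shuffle_nil_right]
  | cons a u ihu =>
    intro v
    induction v with
    | nil => simp [shuffle_nil_left, shuffle_nil_right]
    | cons b v ihv =>
      rw [shuffle_cons_cons, List.reverse_cons, List.reverse_cons, shuffle_snoc_snoc,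
        ← List.reverse_cons (a := b), ← ihu, ← List.reverse_cons (a := a), ← ihv]
      simp [Multiset.map_map, Function.comp]

/-! ### Analytic lemmas -/

/-- pointwise derivative of `chenAux`. -/
noncomputable def chenD {A : Type*} (lam : A → ℝ → ℂ) : List A → ℝ → ℂ
  | [], _ => 0
  | a :: w, t => lam a t * chenAux lam w t

lemma chenAux_continuous {A : Type*} (lam : A → ℝ → ℂ) (hcont : ∀ a, Continuous (lam a)) :
    ∀ w : List A, Continuous (chenAux lam w) := by
  intro w
  induction w with
  | nil => simpa [chenAux] using continuous_const
  | cons a w ih =>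
    have h : Continuous fun s => lam a s * chenAux lam w s := (hcont a).mul ih
    have : Continuous fun t => ∫ s in (0:ℝ)..t, lam a s * chenAux lam w s := by
      apply intervalIntegral.continuous_primitive
      exact fun c d => h.intervalIntegrable c d
    simpa [chenAux] using this

lemma chenAux_hasDerivAt {A : Type*} (lam : A → ℝ → ℂ) (hcont : ∀ a, Continuous (lam a))
    (w : List A) (t : ℝ) : HasDerivAt (chenAux lam w) (chenD lam w t) t := by
  cases w with
  | nil => simpa [chenAux, chenD] using (hasDerivAt_const t (1:ℂ))
  | cons a w =>
    have h : Continuous fun s => lam a s * chenAux lam w s :=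
      (hcont a).mul (chenAux_continuous lam hcont w)
    simpa [chenAux, chenD] using (h.integral_hasStrictDerivAt 0 t).hasDerivAt

lemma chenAux_zero {A : Type*} (lam : A → ℝ → ℂ) (a : A) (w : List A) :
    chenAux lam (a :: w) 0 = 0 := by
  simp [chenAux]

lemma hasDerivAt_multiset_sum {ι : Type*} (s : Multiset ι) (f : ι → ℝ → ℂ) (f' : ι → ℂ)
    (t : ℝ) (h : ∀ i ∈ s, HasDerivAt (f i) (f' i) t) :
    HasDerivAt (fun x => (s.map (f · x)).sum) ((s.map f').sum) t := by
  induction s using Multiset.induction_on with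
  | empty => simpa using hasDerivAt_const t (0:ℂ)
  | cons a s ih =>
    have := (h a (Multiset.mem_cons_self a s)).add
      (ih (fun i hi => h i (Multiset.mem_cons_of_mem hi)))
    simp only [Multiset.map_cons, Multiset.sum_cons]
    exact this

lemma eq_of_deriv_eq {f g f' : ℝ → ℂ} (h0 : f 0 = g 0)
    (hf : ∀ x, HasDerivAt f (f' x) x) (hg : ∀ x, HasDerivAt g (f' x) x) (t : ℝ) :
    f t = g t := by
  have hd : ∀ x, HasDerivAt (fun y => f y - g y) 0 x := by
    intro x; have := (hf x).sub (hg x); rwa [sub_self] at this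
  have hc : f t - g t = f 0 - g 0 :=
    is_const_of_deriv_eq_zero (fun x => (hd x).differentiableAt)
      (fun x => (hd x).deriv) t 0
  rw [h0, sub_self] at hc
  exact sub_eq_zero.mp hc

/-! ### The key identity -/

lemma chen_key {A : Type*} (lam : A → ℝ → ℂ) (hcont : ∀ a, Continuous (lam a)) :
    ∀ u v : List A, ∀ t : ℝ,
      chenAux lam u t * chenAux lam v t = ((shuffle u v).map (fun w => chenAux lam w t)).sum := by
  intro u
  induction u with
  | nil => intro v t; simp [chenAux, shuffle_nil_left]
  | cons a u ihu =>
    intro v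
    induction v with
    | nil => intro t; simp [chenAux, shuffle_nil_right]
    | cons b v ihv =>
      intro t
      refine eq_of_deriv_eq
        (f := fun x => chenAux lam (a::u) x * chenAux lam (b::v) x)
        (g := fun x => ((shuffle (a::u) (b::v)).map (fun w => chenAux lam w x)).sum)
        (f' := fun x => lam a x * (chenAux lam u x * chenAux lam (b::v) x)
          + lam b x * (chenAux lam (a::u) x * chenAux lam v x)) ?_ ?_ ?_ t
      · -- values at 0
        simp [chenAux_zero, shuffle_cons_cons, Multiset.map_map, Function.comp]
      · -- derivative of the product
        intro x
        have := (chenAux_hasDerivAt lam hcont (a::u) x).mul (chenAux_hasDerivAt lam hcont (b::v) x)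
        convert this using 1
        · rfl
        · rfl
        simp only [chenD]
        ring
      · -- derivative of the shuffle sum
        intro x
        have := hasDerivAt_multiset_sum (shuffle (a::u) (b::v)) (fun w x => chenAux lam w x)
          (fun w => chenD lam w x) x (fun w _ => chenAux_hasDerivAt lam hcont w x)
        convert this using 1
        rw [shuffle_cons_cons]
        simp only [Multiset.map_add, Multiset.map_map, Multiset.sum_add, Function.comp]
        simp only [chenD, Multiset.sum_map_mul_left]
        rw [← ihu (b::v) x, ← ihv x]

/-- Chen's shuffle identity for iterated integrals. -/
theorem chen_shuffle_identity {A : Type*} (lam : A → ℝ → ℂ)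
    (hcont : ∀ a : A, Continuous (lam a)) (t : ℝ) :
    IsShuffleChar (fun w => chenCoeff lam w t) := by
  constructor
  · simp [chenCoeff, chenAux]
  · intro w w'
    simp only [chenCoeff]
    rw [chen_key lam hcont w.reverse w'.reverse t, ← shuffle_reverse, Multiset.map_map]
    rfl
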